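/- The sequence (τ_{n−1}, τ_{n−2}, …, τ_1, τ_0) is a perfect basis for the wreath product G(r,n): every element π ∈ G(r,n) has a unique presentation π = τ_{n−1}^{k_{n−1}} ⋯ τ_1^{k_1} τ_0^{k_0} with 0 ≤ k_i < r(i+1) for all 0 ≤ i ≤ n−1, and the order of τ_i equals r(i+1). -/

import Mathlib

/-- `prodPow a k` is the ordered product `a 0 ^ k 0 * a 1 ^ k 1 * ⋯ * a (n-1) ^ k (n-1)`. -/
def prodPow {G : Type*} [Group G] {n : ℕ} (a : Fin n → G) (k : Fin n → ℕ) : G :=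
  (List.ofFn fun i => a i ^ k i).prod

/-- The sequence `a` gives a unique presentation `g = a 0 ^ k 0 * ⋯ * a (n-1) ^ k (n-1)`
with `0 ≤ k i < m i` for every element `g` of the group. -/
def IsUniqueProd {G : Type*} [Group G] {n : ℕ} (a : Fin n → G) (m : Fin n → ℕ) : Prop :=
  ∀ g : G, ∃! k : (i : Fin n) → Fin (m i), g = prodPow a fun i => (k i : ℕ)

/-- A perfect basis: every group element has a unique presentation with each exponent
below the order of the corresponding basis element. -/
def IsPerfectBasis {G : Type*} [Group G] {n : ℕ} (a : Fin n → G) : Prop :=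
  IsUniqueProd a fun i => orderOf (a i)

/-- `swapNat n j` is the adjacent transposition `s_{j+1}` (the swap of the 1-indexed
letters `j+1` and `j+2`, i.e. of the `Fin n` indices `j` and `j+1`). -/
def swapNat (n j : ℕ) : Equiv.Perm (Fin n) :=
  if h : j + 1 < n then Equiv.swap ⟨j, Nat.lt_of_succ_lt h⟩ ⟨j + 1, h⟩ else 1

/-- `tcyc n i` is the cycle `t_i = s_i s_{i-1} ⋯ s_1 = (i+1, i, …, 1)`
(sending `i+1 ↦ i ↦ ⋯ ↦ 1 ↦ i+1`); `tcyc n 0` is the identity. -/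
def tcyc (n i : ℕ) : Equiv.Perm (Fin n) :=
  ((List.range i).reverse.map (swapNat n)).prod
/-- The wreath product `G(r,n) = Z_r ≀ S_n`: pairs `((c_1,…,c_n); π)` with `c_i ∈ Z_r`,
`π ∈ S_n`. -/
@[ext]
structure WreathZ (r n : ℕ) where
  c : Fin n → ZMod r
  pi : Equiv.Perm (Fin n)

namespace WreathZ

variable {r n : ℕ}

instance : Mul (WreathZ r n) :=
  ⟨fun x y => ⟨fun i => x.c i + y.c (x.pi⁻¹ i), x.pi * y.pi⟩⟩

instance : One (WreathZ r n) := ⟨⟨0, 1⟩⟩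

instance : Inv (WreathZ r n) := ⟨fun x => ⟨fun i => -x.c (x.pi i), x.pi⁻¹⟩⟩

@[simp] lemma mul_c (x y : WreathZ r n) : (x * y).c = fun i => x.c i + y.c (x.pi⁻¹ i) := rfl
@[simp] lemma mul_pi (x y : WreathZ r n) : (x * y).pi = x.pi * y.pi := rfl
@[simp] lemma one_c : (1 : WreathZ r n).c = 0 := rfl
@[simp] lemma one_pi : (1 : WreathZ r n).pi = 1 := rfl
@[simp] lemma inv_c (x : WreathZ r n) : x⁻¹.c = fun i => -x.c (x.pi i) := rfl
@[simp] lemma inv_pi (x : WreathZ r n) : x⁻¹.pi = x.pi⁻¹ := rfl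

instance : Group (WreathZ r n) where
  mul_assoc x y z := by
    ext i
    · simp [add_assoc, Equiv.Perm.mul_apply]
    · simp [mul_assoc]
  one_mul x := by ext i <;> simp
  mul_one x := by ext i <;> simp
  inv_mul_cancel x := by
    ext i
    · simp [Equiv.Perm.mul_apply]
    · simp

end WreathZ


/-- `tau r n i = τ_i = ((1, 0, …, 0); t_i) ∈ G(r,n)`. -/
def tau (r n i : ℕ) : WreathZ r n :=
  ⟨fun j => if j.val = 0 then 1 else 0, tcyc n i⟩
namespace TauAux

lemma tcyc_succ (n i : ℕ) : tcyc n (i+1) = swapNat n i * tcyc n i := by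
  unfold tcyc
  rw [List.range_succ]
  simp

lemma tcyc_val {n : ℕ} (i : ℕ) (hi : i < n) (j : Fin n) :
    ((tcyc n i) j).val = if j.val = 0 then i else if j.val ≤ i then j.val - 1 else j.val := by
  induction i with
  | zero =>
    have : tcyc n 0 = 1 := by simp [tcyc]
    rw [this]
    simp only [Equiv.Perm.one_apply]
    split
    · omega
    · split <;> omega
  | succ i ih =>
    have hi' : i < n := by omega
    have hx := ih hi'
    rw [tcyc_succ, Equiv.Perm.mul_apply]
    set x := tcyc n i j with hxdef
    unfold swapNat
    rw [dif_pos hi, Equiv.swap_apply_def]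
    have hxn : x.val < n := x.isLt
    have hjn : j.val < n := j.isLt
    simp only [apply_ite Fin.val, Fin.ext_iff, Fin.val_mk]
    split_ifs at hx ⊢ <;> omega


lemma mod_shift (i x : ℕ) (hx : x ≤ i) : (x + i) % (i + 1) = if x = 0 then i else x - 1 := by
  split
  · next h => subst h; simp [Nat.mod_eq_of_lt]
  · next h =>
    have : x + i = (x - 1) + (i + 1) := by omega
    rw [this, Nat.add_mod_right, Nat.mod_eq_of_lt (by omega)]

lemma tcyc_pow_val {n : ℕ} (i : ℕ) (hi : i < n) (k : ℕ) (j : Fin n) :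
    (((tcyc n i) ^ k) j).val = if j.val ≤ i then (j.val + k * i) % (i + 1) else j.val := by
  induction k with
  | zero =>
    simp only [pow_zero, Equiv.Perm.one_apply]
    split
    · next h => rw [Nat.mod_eq_of_lt (by omega)]; omega
    · rfl
  | succ k ih =>
    rw [pow_succ', Equiv.Perm.mul_apply]
    have hx := ih
    set x := ((tcyc n i) ^ k) j with hxdef
    rw [tcyc_val i hi x]
    by_cases hj : j.val ≤ i
    · rw [if_pos hj] at hx
      have hxle : x.val ≤ i := by
        rw [hx]; have := Nat.mod_lt (j.val + k * i) (y := i+1) (by omega); omega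
      have key : (x.val + i) % (i + 1) = (j.val + (k+1) * i) % (i + 1) := by
        rw [hx, Nat.mod_add_mod]
        congr 1
        ring
      rw [mod_shift i x.val hxle] at key
      rw [if_pos hj, ← key]
      split_ifs <;> omega
    · rw [if_neg hj] at hx
      rw [if_neg hj]
      rw [hx]
      have : ¬ j.val ≤ i := hj
      split_ifs <;> omega
lemma tcyc_inv_val {n : ℕ} (i : ℕ) (hi : i < n) (j : Fin n) :
    ((tcyc n i)⁻¹ j).val = if j.val < i then j.val + 1 else if j.val = i then 0 else j.val := by
  have h : tcyc n i ((tcyc n i)⁻¹ j) = j := Equiv.apply_symm_apply _ j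
  have hv := congrArg Fin.val h
  rw [tcyc_val i hi] at hv
  have h1 : ((tcyc n i)⁻¹ j).val < n := Fin.isLt _
  have h2 : j.val < n := j.isLt
  split_ifs at hv ⊢ <;> omega

lemma tau_pow {r n : ℕ} (i : ℕ) (hi : i < n) (k : ℕ) :
    (tau r n i) ^ k = ⟨fun j => if j.val ≤ i
        then (((k + (i + j.val) % (i + 1)) / (i + 1) : ℕ) : ZMod r) else 0,
      (tcyc n i) ^ k⟩ := by
  induction k with
  | zero =>
    rw [pow_zero]
    refine WreathZ.ext ?_ rfl
    funext j
    show (0 : ZMod r) = if j.val ≤ i then (((0 + (i + j.val) % (i + 1)) / (i + 1) : ℕ) : ZMod r) else 0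
    split
    · rw [Nat.div_eq_of_lt (by have := Nat.mod_lt (i + j.val) (y := i+1) (by omega); omega)]
      simp
    · rfl
  | succ k ih =>
    rw [pow_succ', ih]
    refine WreathZ.ext ?_ ?_
    · funext j
      show (tau r n i).c j + _ = _
      have hy := tcyc_inv_val i hi j
      set y := (tcyc n i)⁻¹ j with hydef
      show (if j.val = 0 then (1 : ZMod r) else 0) +
        (if y.val ≤ i then (((k + (i + y.val) % (i + 1)) / (i + 1) : ℕ) : ZMod r) else 0) =
        (if j.val ≤ i then (((k + 1 + (i + j.val) % (i + 1)) / (i + 1) : ℕ) : ZMod r) else 0)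
      have hjn : j.val < n := j.isLt
      by_cases hji : j.val ≤ i
      · rw [if_pos hji]
        by_cases hj0 : j.val = 0
        · rw [if_pos hj0]
          by_cases hi0 : i = 0
          · have hyv : y.val = 0 := by split_ifs at hy <;> omega
            rw [if_pos (by omega : y.val ≤ i)]
            subst hi0
            simp only [hyv, hj0]
            norm_num
            push_cast
            ring
          · have hyv : y.val = 1 := by split_ifs at hy <;> omega
            rw [if_pos (by omega : y.val ≤ i), hyv, hj0]
            have e1 : (i + 1) % (i + 1) = 0 := Nat.mod_self _
            have e2 : (i + 0) % (i + 1) = i := by rw [Nat.add_zero, Nat.mod_eq_of_lt (by omega)]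
            rw [e1, e2]
            have e3 : (k + 1 + i) / (i + 1) = 1 + (k + 0) / (i + 1) := by
              rw [Nat.add_zero, show k + 1 + i = k + (i+1) by ring, Nat.add_div_right _ (by omega)]
              ring
            rw [e3]
            push_cast
            ring
        · rw [if_neg hj0]
          by_cases hjlt : j.val < i
          · have hyv : y.val = j.val + 1 := by split_ifs at hy <;> omega
            rw [if_pos (by omega : y.val ≤ i), hyv]
            have e1 : (i + (j.val + 1)) % (i + 1) = j.val := by
              rw [show i + (j.val + 1) = (i + 1) + j.val by ring, Nat.add_mod_left,
                Nat.mod_eq_of_lt (by omega)]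
            have e2 : (i + j.val) % (i + 1) = j.val - 1 := by
              rw [Nat.add_comm, mod_shift i j.val (by omega), if_neg hj0]
            rw [e1, e2, show k + 1 + (j.val - 1) = k + j.val by omega]
            rw [zero_add]
          · have hji' : j.val = i := by omega
            have hyv : y.val = 0 := by split_ifs at hy <;> omega
            rw [if_pos (by omega : y.val ≤ i), hyv]
            have e1 : (i + 0) % (i + 1) = i := by rw [Nat.add_zero, Nat.mod_eq_of_lt (by omega)]
            have e2 : (i + j.val) % (i + 1) = i - 1 := by
              rw [Nat.add_comm, mod_shift i j.val (by omega), hji', if_neg (by omega)]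
            rw [e1, e2, show k + 1 + (i - 1) = k + i by omega]
            rw [zero_add]
      · rw [if_neg hji, if_neg (show ¬ j.val = 0 by omega), if_neg (show ¬ y.val ≤ i by split_ifs at hy <;> omega)]
        rw [add_zero]
    · exact (pow_succ' _ _).symm
lemma orderOf_tau {r n : ℕ} (hr : 0 < r) (i : ℕ) (hi : i < n) :
    orderOf (tau r n i) = r * (i + 1) := by
  haveI : NeZero r := ⟨hr.ne'⟩
  apply Nat.dvd_antisymm
  · apply orderOf_dvd_of_pow_eq_one
    rw [tau_pow i hi]
    refine WreathZ.ext ?_ ?_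
    · funext j
      show (if j.val ≤ i then (((r * (i+1) + (i + j.val) % (i + 1)) / (i + 1) : ℕ) : ZMod r)
        else 0) = (0 : ZMod r)
      split
      · have hlt : (i + j.val) % (i + 1) < i + 1 := Nat.mod_lt _ (by omega)
        rw [show r * (i+1) = (i+1) * r by ring, Nat.mul_add_div (by omega),
          Nat.div_eq_of_lt hlt, Nat.add_zero]
        exact ZMod.natCast_self r
      · rfl
    · show (tcyc n i) ^ (r * (i+1)) = 1
      ext j
      have hv := tcyc_pow_val i hi (r * (i+1)) j
      have : (j.val + r * (i+1) * i) % (i + 1) = j.val % (i+1) := by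
        rw [show r * (i+1) * i = (r * i) * (i+1) by ring, Nat.add_mul_mod_self_right]
      rw [hv]
      simp only [Equiv.Perm.one_apply]
      split
      · rw [this, Nat.mod_eq_of_lt (by omega)]
      · rfl
  · have h1 := pow_orderOf_eq_one (tau r n i)
    set d := orderOf (tau r n i) with hd
    rw [tau_pow i hi] at h1
    have hzn : (0 : ℕ) < n := by omega
    have hpi := congrArg WreathZ.pi h1
    have hc := congrArg WreathZ.c h1
    simp only [WreathZ.one_pi] at hpi
    have hpi0 := congrArg Fin.val (congrArg (fun (σ : Equiv.Perm (Fin n)) => σ ⟨0, hzn⟩) hpi)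
    simp only [Equiv.Perm.one_apply] at hpi0
    rw [tcyc_pow_val i hi] at hpi0
    simp only [Fin.val_mk, if_pos (Nat.zero_le i), Nat.zero_add] at hpi0
    -- hpi0 : d * i % (i+1) = 0
    have hdvd : (i + 1) ∣ d * i := Nat.dvd_of_mod_eq_zero hpi0
    have hcop : Nat.Coprime (i + 1) i := by simp
    have hdvd2 : (i + 1) ∣ d := (Nat.Coprime.dvd_of_dvd_mul_right hcop) hdvd
    obtain ⟨e, he⟩ := hdvd2
    have hc0 := congrFun hc ⟨0, hzn⟩
    simp only [WreathZ.one_c, Pi.zero_apply] at hc0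
    have : ((d + (i + 0) % (i + 1)) / (i + 1) : ℕ) = e := by
      rw [Nat.add_zero, Nat.mod_eq_of_lt (by omega : i < i + 1), he,
        Nat.mul_add_div (by omega), Nat.div_eq_of_lt (by omega), Nat.add_zero]
    rw [if_pos (Nat.zero_le i), this] at hc0
    have hre : r ∣ e := (ZMod.natCast_eq_zero_iff e r).mp hc0
    obtain ⟨f, hf⟩ := hre
    exact ⟨f, by rw [he, hf]; ring⟩
def FixAbove {r n : ℕ} (M : ℕ) (g : WreathZ r n) : Prop :=
  ∀ i : Fin n, M ≤ i.val → g.pi i = i ∧ g.c i = 0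

lemma fixAbove_one {r n M : ℕ} : FixAbove M (1 : WreathZ r n) := by
  intro i _
  exact ⟨rfl, rfl⟩

lemma fixAbove_mul {r n M : ℕ} {x y : WreathZ r n} (hx : FixAbove M x) (hy : FixAbove M y) :
    FixAbove M (x * y) := by
  intro i hi
  obtain ⟨hx1, hx2⟩ := hx i hi
  obtain ⟨hy1, hy2⟩ := hy i hi
  have hinv : x.pi⁻¹ i = i := by
    conv_lhs => rw [← hx1]
    exact Equiv.symm_apply_apply _ _
  constructor
  · show x.pi (y.pi i) = i
    rw [hy1, hx1]
  · show x.c i + y.c (x.pi⁻¹ i) = 0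
    rw [hinv, hx2, hy2, add_zero]

lemma fixAbove_pow {r n M : ℕ} {x : WreathZ r n} (hx : FixAbove M x) (k : ℕ) :
    FixAbove M (x ^ k) := by
  induction k with
  | zero => rw [pow_zero]; exact fixAbove_one
  | succ k ih => rw [pow_succ]; exact fixAbove_mul ih hx

lemma fixAbove_tau {r n M d : ℕ} (hd : d < M) (hM : M ≤ n) : FixAbove M (tau r n d) := by
  intro i hi
  have hdn : d < n := by omega
  constructor
  · show tcyc n d i = i
    apply Fin.ext
    rw [tcyc_val d hdn]
    have : i.val < n := i.isLt
    split_ifs <;> omega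
  · show (if i.val = 0 then (1 : ZMod r) else 0) = 0
    rw [if_neg (by omega)]

lemma keyA {r n : ℕ} (hr : 0 < r) {m : ℕ} (hm : 1 ≤ m) (hmn : m ≤ n) {k k' : ℕ}
    (hk : k < r * m) (hk' : k' < r * m) {h h' : WreathZ r n}
    (hh : FixAbove (m - 1) h) (hh' : FixAbove (m - 1) h')
    (heq : tau r n (m - 1) ^ k * h = tau r n (m - 1) ^ k' * h') : k = k' := by
  haveI : NeZero r := ⟨hr.ne'⟩
  have him : m - 1 < n := by omega
  set i := m - 1 with hidef
  have him1 : i + 1 = m := by omega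
  set idx : Fin n := ⟨m - 1, him⟩ with hidx
  have hidxv : idx.val = i := rfl
  have hidxle : idx.val ≤ i := Nat.le_refl _
  have hpik : (tau r n i ^ k).pi = (tcyc n i) ^ k := by rw [tau_pow i him k]
  have hpik' : (tau r n i ^ k').pi = (tcyc n i) ^ k' := by rw [tau_pow i him k']
  have hck : (tau r n i ^ k).c
      = fun j => if j.val ≤ i then (((k + (i + j.val) % (i + 1)) / (i + 1) : ℕ) : ZMod r) else 0 := by
    rw [tau_pow i him k]
  have hck' : (tau r n i ^ k').c
      = fun j => if j.val ≤ i then (((k' + (i + j.val) % (i + 1)) / (i + 1) : ℕ) : ZMod r) else 0 := by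
    rw [tau_pow i him k']
  -- permutation component
  have hpi := congrArg WreathZ.pi heq
  simp only [WreathZ.mul_pi] at hpi
  have hpid := congrArg (fun (σ : Equiv.Perm (Fin n)) => σ idx) hpi
  simp only [Equiv.Perm.mul_apply] at hpid
  rw [(hh idx (Nat.le_refl _)).1, (hh' idx (Nat.le_refl _)).1, hpik, hpik'] at hpid
  have hpv := congrArg Fin.val hpid
  rw [tcyc_pow_val i him k idx, tcyc_pow_val i him k' idx,
    if_pos hidxle, if_pos hidxle] at hpv
  -- hpv : (idx + k*i) % (i+1) = (idx + k'*i) % (i+1)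
  have hmod : k % m = k' % m := by
    have hME : (k + 1) * i ≡ (k' + 1) * i [MOD m] := by
      unfold Nat.ModEq
      rw [← him1]
      rw [show (k+1) * i = idx.val + k * i by rw [hidxv]; ring,
        show (k'+1) * i = idx.val + k' * i by rw [hidxv]; ring]
      exact hpv
    have hcop : Nat.Coprime i m := by
      rw [← him1]; simp [Nat.coprime_comm]
    have h3 : k + 1 ≡ k' + 1 [MOD m] := hME.cancel_right_of_coprime hcop.symm
    exact Nat.ModEq.add_right_cancel' 1 h3
  -- c component at p
  set p := ((tcyc n i) ^ k) idx with hpdef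
  have hpp : ((tcyc n i) ^ k') idx = p := hpid.symm
  have hc := congrArg WreathZ.c heq
  have hcp := congrFun hc p
  simp only [WreathZ.mul_c] at hcp
  rw [hpik, hpik'] at hcp
  have hip1 : ((tcyc n i) ^ k)⁻¹ p = idx := by rw [hpdef]; exact Equiv.symm_apply_apply _ _
  have hip2 : ((tcyc n i) ^ k')⁻¹ p = idx := by rw [← hpp]; exact Equiv.symm_apply_apply _ _
  rw [hip1, hip2, (hh idx (Nat.le_refl _)).2, (hh' idx (Nat.le_refl _)).2, add_zero, add_zero] at hcp
  have hpile : p.val ≤ i := by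
    have ht := tcyc_pow_val i him k idx
    rw [if_pos hidxle] at ht
    rw [hpdef, ht]
    have := Nat.mod_lt (idx.val + k * i) (y := i + 1) (by omega)
    omega
  simp only [hck, hck'] at hcp
  rw [if_pos hpile, if_pos hpile] at hcp
  -- arithmetic
  set w := (i + p.val) % (i + 1) with hw
  have hm0 : 0 < m := hm
  have e1 : (k + w) / (i + 1) = k / m + (k % m + w) / m := by
    rw [him1]
    conv_lhs => rw [← Nat.div_add_mod k m, add_assoc]
    rw [Nat.mul_add_div hm0]
  have e2 : (k' + w) / (i + 1) = k' / m + (k' % m + w) / m := by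
    rw [him1]
    conv_lhs => rw [← Nat.div_add_mod k' m, add_assoc]
    rw [Nat.mul_add_div hm0]
  rw [e1, e2, hmod] at hcp
  have hcast : ((k / m : ℕ) : ZMod r) = ((k' / m : ℕ) : ZMod r) := by
    have hx := hcp
    push_cast at hx
    exact add_right_cancel hx
  have hq : k / m < r := by rw [Nat.div_lt_iff_lt_mul hm0]; omega
  have hq' : k' / m < r := by rw [Nat.div_lt_iff_lt_mul hm0]; omega
  have : k / m = k' / m := by
    have h1 := ZMod.val_cast_of_lt (n := r) hq
    have h2 := ZMod.val_cast_of_lt (n := r) hq'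
    rw [← h1, ← h2, hcast]
  rw [← Nat.div_add_mod k m, ← Nat.div_add_mod k' m, hmod, this]
lemma phi_inj {r n : ℕ} (hr : 0 < r) (k k' : (j : Fin n) → Fin (r * (n - j.val)))
    (heq : prodPow (fun j : Fin n => tau r n (n - 1 - j.val)) (fun j => (k j : ℕ))
         = prodPow (fun j : Fin n => tau r n (n - 1 - j.val)) (fun j => (k' j : ℕ))) :
    k = k' := by
  set a : Fin n → WreathZ r n := fun j => tau r n (n - 1 - j.val) with ha
  set l := List.ofFn (fun i : Fin n => a i ^ (k i : ℕ)) with hl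
  set l' := List.ofFn (fun i : Fin n => a i ^ (k' i : ℕ)) with hl'
  have hlen : l.length = n := List.length_ofFn
  have hlen' : l'.length = n := List.length_ofFn
  have hprod : l.prod = l'.prod := heq
  have main : ∀ t : ℕ, ∀ j : Fin n, j.val < t → (k j : ℕ) = (k' j : ℕ) := by
    intro t
    induction t with
    | zero => intro j hj; omega
    | succ t ih =>
      intro j hj
      by_cases hjt : j.val < t
      · exact ih j hjt
      have hjt' : j.val = t := by omega
      have htn : t < n := by omega
      have htake : l.take t = l'.take t := by
        apply List.ext_getElem
        · simp [hlen, hlen']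
        · intro idx h1 h2
          rw [List.getElem_take, List.getElem_take]
          simp only [hl, hl', List.getElem_ofFn]
          have : (k ⟨idx, by rw [List.length_take] at h1; omega⟩ : ℕ)
              = (k' ⟨idx, by rw [List.length_take] at h1; omega⟩ : ℕ) := by
            apply ih
            simp only [Fin.val_mk]
            rw [List.length_take] at h1
            omega
          congr 1
      have hdrop : (l.drop t).prod = (l'.drop t).prod := by
        have h1 := List.prod_take_mul_prod_drop l t
        have h2 := List.prod_take_mul_prod_drop l' t
        rw [← h1, ← h2, htake] at hprod
        exact mul_left_cancel hprod
      have htl : t < l.length := by omega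
      have htl' : t < l'.length := by omega
      rw [List.drop_eq_getElem_cons htl, List.drop_eq_getElem_cons htl',
        List.prod_cons, List.prod_cons] at hdrop
      simp only [hl, hl', List.getElem_ofFn] at hdrop
      have hfix : ∀ (kk : (j : Fin n) → Fin (r * (n - j.val))),
          FixAbove (n - 1 - t)
            ((List.ofFn (fun i : Fin n => a i ^ (kk i : ℕ))).drop (t + 1)).prod := by
        intro kk
        apply List.prod_induction _ (fun _ _ hx hy => fixAbove_mul hx hy) fixAbove_one
        intro x hx
        rw [List.mem_iff_getElem] at hx
        obtain ⟨idx, hidx, hxe⟩ := hx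
        rw [List.getElem_drop, List.getElem_ofFn] at hxe
        subst hxe
        have hb : t + 1 + idx < n := by
          have := hidx
          simp only [List.length_drop, List.length_ofFn] at this
          omega
        refine fixAbove_pow (fixAbove_tau ?_ ?_) _ <;> (try simp only [Fin.val_mk]) <;> omega
      have hjfin : j = ⟨t, htn⟩ := Fin.ext hjt'
      have hmm : (1 : ℕ) ≤ n - t := by omega
      have hkey := keyA hr hmm (by omega : n - t ≤ n)
        (show (k ⟨t, htn⟩ : ℕ) < r * (n - t) by
          have := (k ⟨t, htn⟩).isLt; simpa using this)
        (show (k' ⟨t, htn⟩ : ℕ) < r * (n - t) by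
          have := (k' ⟨t, htn⟩).isLt; simpa using this)
        (show FixAbove (n - t - 1) _ from
          (by rw [show n - t - 1 = n - 1 - t by omega]; exact hfix k))
        (show FixAbove (n - t - 1) _ from
          (by rw [show n - t - 1 = n - 1 - t by omega]; exact hfix k'))
        (by
          rw [show n - t - 1 = n - 1 - t by omega]
          show tau r n (n - 1 - t) ^ ((k ⟨t, htn⟩ : ℕ)) * _ = _
          have hav : a ⟨t, htn⟩ = tau r n (n - 1 - t) := by rw [ha]
          rw [← hav]
          exact hdrop)
      rw [hjfin]
      exact hkey
  funext j
  exact Fin.ext (main n j j.isLt)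
def wreathEquiv (r n : ℕ) : WreathZ r n ≃ (Fin n → ZMod r) × Equiv.Perm (Fin n) where
  toFun g := (g.c, g.pi)
  invFun p := ⟨p.1, p.2⟩
  left_inv g := rfl
  right_inv p := rfl

lemma prod_range_id_succ (n : ℕ) : ∏ j ∈ Finset.range n, (j + 1) = n.factorial := by
  induction n with
  | zero => simp
  | succ n ih => rw [Finset.prod_range_succ, ih, Nat.factorial_succ]; ring

lemma prod_sub (n : ℕ) : ∏ j ∈ Finset.range n, (n - j) = n.factorial := by
  rw [← prod_range_id_succ n, ← Finset.prod_range_reflect (fun j => j + 1) n]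
  apply Finset.prod_congr rfl
  intro j hj
  rw [Finset.mem_range] at hj
  omega

end TauAux


/-- The sequence `(τ_{n-1}, …, τ_1, τ_0)` is a perfect basis for the
wreath product `G(r,n)`: the order of `τ_i` is `r(i+1)`, and every `π ∈ G(r,n)` has a
unique presentation `π = τ_{n-1}^{k_{n-1}} ⋯ τ_0^{k_0}` with `0 ≤ k_i < r(i+1)`. -/
theorem tau_isPerfectBasis_wreath (r n : ℕ) (hr : 0 < r) (hn : 1 ≤ n) :
    (∀ i : ℕ, i ≤ n - 1 → orderOf (tau r n i) = r * (i + 1)) ∧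
    IsUniqueProd (fun j : Fin n => tau r n (n - 1 - j.val))
      (fun j : Fin n => r * (n - j.val)) ∧
    IsPerfectBasis (fun j : Fin n => tau r n (n - 1 - j.val)) := by
  haveI : NeZero r := ⟨hr.ne'⟩
  haveI : Fintype (WreathZ r n) := Fintype.ofEquiv _ (TauAux.wreathEquiv r n).symm
  have horder : ∀ i : ℕ, i ≤ n - 1 → orderOf (tau r n i) = r * (i + 1) := by
    intro i hi
    exact TauAux.orderOf_tau hr i (by omega)
  have hcard : Fintype.card ((j : Fin n) → Fin (r * (n - j.val)))
      = Fintype.card (WreathZ r n) := by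
    rw [Fintype.card_congr (TauAux.wreathEquiv r n), Fintype.card_prod, Fintype.card_fun,
      ZMod.card r, Fintype.card_perm, Fintype.card_fin, Fintype.card_pi]
    simp only [Fintype.card_fin]
    rw [Finset.prod_mul_distrib, Finset.prod_const, Finset.card_univ, Fintype.card_fin]
    congr 1
    rw [Fin.prod_univ_eq_prod_range (fun j => n - j) n, TauAux.prod_sub]
  have huniq : IsUniqueProd (fun j : Fin n => tau r n (n - 1 - j.val))
      (fun j : Fin n => r * (n - j.val)) := by
    intro g
    have hinj : Function.Injective
        (fun kk : (j : Fin n) → Fin (r * (n - j.val)) =>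
          prodPow (fun j : Fin n => tau r n (n - 1 - j.val)) (fun j => (kk j : ℕ))) :=
      fun k k' hh => TauAux.phi_inj hr k k' hh
    have hbij := (Fintype.bijective_iff_injective_and_card _).mpr ⟨hinj, hcard⟩
    obtain ⟨kk, hkk, hun⟩ := hbij.existsUnique g
    exact ⟨kk, hkk.symm, fun y hy => hun y hy.symm⟩
  refine ⟨horder, huniq, ?_⟩
  have hfun : (fun j : Fin n => orderOf (tau r n (n - 1 - j.val)))
      = fun j : Fin n => r * (n - j.val) := by
    funext j
    rw [horder (n - 1 - j.val) (by omega)]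
    congr 1
    have := j.isLt
    omega
  show IsUniqueProd (fun j : Fin n => tau r n (n - 1 - j.val))
    (fun j : Fin n => orderOf (tau r n (n - 1 - j.val)))
  rw [hfun]
  exact huniq
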